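/- Let E be a topological graph and let X₁⁰, X₂⁰ be two closed invariant subsets of E⁰. Then X⁰ = X₁⁰ ∪ X₂⁰ is a closed invariant subset, X⁰_sce ⊆ (X₁⁰)_sce ∪ (X₂⁰)_sce, and X⁰_inf = (X₁⁰)_inf ∪ (X₂⁰)_inf. -/

import Mathlib

open Set Topology

variable {E0 E1 : Type*} [TopologicalSpace E0] [TopologicalSpace E1]

/-- A set is positively invariant if the range of every edge with domain in it lies in it. -/
def PosInv (d r : E1 → E0) (X : Set E0) : Prop := ∀ e : E1, d e ∈ X → r e ∈ X

/-- Sources: `E⁰ \ closure (r (E¹))`. -/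
def Sce (r : E1 → E0) : Set E0 := (closure (Set.range r))ᶜ

/-- Vertices having a neighborhood with compact `r`-preimage. -/
def FinSet (r : E1 → E0) : Set E0 := {v | ∃ V ∈ 𝓝 v, IsCompact (r ⁻¹' V)}

/-- Regular vertices. -/
def Rg (r : E1 → E0) : Set E0 := FinSet r \ closure (Sce r)

/-- Singular vertices. -/
def Sg (r : E1 → E0) : Set E0 := (Rg r)ᶜ

/-- A set is negatively invariant if every regular vertex in it receives an edge from it. -/
def NegInv (d r : E1 → E0) (X : Set E0) : Prop :=
  ∀ v ∈ X ∩ Rg r, ∃ e : E1, r e = v ∧ d e ∈ X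

/-- Invariant = positively and negatively invariant. -/
def Invariant (d r : E1 → E0) (X : Set E0) : Prop := PosInv d r X ∧ NegInv d r X

/-- The chain condition for a finite path `(e 0, e 1, …, e n)` of edges:
`d (e k) = r (e (k+1))`. -/
def IsPath (d r : E1 → E0) {n : ℕ} (e : Fin (n + 1) → E1) : Prop :=
  ∀ i : Fin n, d (e i.castSucc) = r (e i.succ)

/-- The positive orbit `Orb⁺(v)`: ranges of finite paths with domain `v`. -/
def OrbPlus (d r : E1 → E0) (v : E0) : Set E0 :=
  {v} ∪ {w | ∃ n : ℕ, ∃ e : Fin (n + 1) → E1,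
    IsPath d r e ∧ d (e (Fin.last n)) = v ∧ r (e 0) = w}

/-- An infinite path of edges. -/
def IsInfPath (d r : E1 → E0) (e : ℕ → E1) : Prop := ∀ k : ℕ, d (e k) = r (e (k + 1))

/-- `S` is the negative orbit space `Orb⁻(v, e)` of some negative orbit `e` of `v`:
either `v` itself (when `v` is singular), or a finite path ending at a singular vertex
with range `v`, or an infinite path with range `v`. -/
def IsNegOrbitSet (d r : E1 → E0) (v : E0) (S : Set E0) : Prop :=
  (v ∈ Sg r ∧ S = {v}) ∨
  (∃ n : ℕ, ∃ e : Fin (n + 1) → E1, IsPath d r e ∧ r (e 0) = v ∧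
    d (e (Fin.last n)) ∈ Sg r ∧ S = insert v (Set.range (d ∘ e))) ∨
  (∃ e : ℕ → E1, IsInfPath d r e ∧ r (e 0) = v ∧ S = insert v (Set.range (d ∘ e)))

/-- The orbit space `Orb(v, e) = ⋃_{v' ∈ Orb⁻(v,e)} Orb⁺(v')`, expressed in terms of the
negative orbit space `S = Orb⁻(v, e)`. -/
def Orb (d r : E1 → E0) (S : Set E0) : Set E0 := ⋃ v ∈ S, OrbPlus d r v

/-- A maximal head: a non-empty closed invariant set in which any two points can be
approximated by the positive orbit of a common vertex. -/
def MaximalHead (d r : E1 → E0) (X : Set E0) : Prop :=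
  X.Nonempty ∧ IsClosed X ∧ Invariant d r X ∧
  ∀ v1 ∈ X, ∀ v2 ∈ X, ∀ V1 ∈ 𝓝 v1, ∀ V2 ∈ 𝓝 v2,
    ∃ w ∈ X, (OrbPlus d r w ∩ V1).Nonempty ∧ (OrbPlus d r w ∩ V2).Nonempty

/-- Hereditary set: `d (r⁻¹ (V)) ⊆ V`. -/
def Hereditary (d r : E1 → E0) (V : Set E0) : Prop := d '' (r ⁻¹' V) ⊆ V

/-- Saturated set: every regular vertex all of whose received edges have domain in `V`
belongs to `V`. -/
def Saturated (d r : E1 → E0) (V : Set E0) : Prop :=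
  ∀ v ∈ Rg r, d '' (r ⁻¹' {v}) ⊆ V → v ∈ V

/-- `H(V) = ⋃ₙ dⁿ ((rⁿ)⁻¹ (V))`. -/
def HSet (d r : E1 → E0) (V : Set E0) : Set E0 :=
  V ∪ {w | ∃ n : ℕ, ∃ e : Fin (n + 1) → E1,
    IsPath d r e ∧ r (e 0) ∈ V ∧ d (e (Fin.last n)) = w}

/-- The sequence `V₀ = V`, `V_{k+1} = V_k ∪ {v ∈ E⁰_rg : d (r⁻¹ (v)) ⊆ V_k}`. -/
def SatSeq (d r : E1 → E0) (V : Set E0) : ℕ → Set E0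
  | 0 => V
  | k + 1 => SatSeq d r V k ∪ {v | v ∈ Rg r ∧ d '' (r ⁻¹' {v}) ⊆ SatSeq d r V k}

/-- The saturation `S(V) = ⋃ₖ V_k`. -/
def SatSet (d r : E1 → E0) (V : Set E0) : Set E0 := ⋃ k, SatSeq d r V k

/-- Sources of the subgraph on a closed positively invariant set `X`, viewed in `E⁰`:
`X⁰_sce = X⁰ \ closure_{X⁰} (r (X¹))` where `X¹ = d⁻¹ (X⁰)`. -/
def SceIn (d r : E1 → E0) (X : Set E0) : Set E0 := X \ closure (r '' (d ⁻¹' X))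

/-- Vertices of the subgraph on `X` having a relative neighborhood with compact
`r`-preimage in `X¹ = d⁻¹(X⁰)`. -/
def FinIn (d r : E1 → E0) (X : Set E0) : Set E0 :=
  {v | v ∈ X ∧ ∃ V ∈ 𝓝 v, IsCompact (r ⁻¹' (V ∩ X) ∩ d ⁻¹' X)}

/-- Infinite receivers of the subgraph on `X`. -/
def InfIn (d r : E1 → E0) (X : Set E0) : Set E0 := X \ FinIn d r X

/-- Regular vertices of the subgraph on `X`. -/
def RgIn (d r : E1 → E0) (X : Set E0) : Set E0 := FinIn d r X \ closure (SceIn d r X)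

/-- Singular vertices of the subgraph on `X`. -/
def SgIn (d r : E1 → E0) (X : Set E0) : Set E0 := X \ RgIn d r X


private lemma finIn_closed_nhds {d r : E1 → E0} (hr : Continuous r)
    [LocallyCompactSpace E0] [T2Space E0] {X : Set E0} {v : E0}
    (hv : v ∈ FinIn d r X) : ∃ V ∈ 𝓝 v, IsClosed V ∧ IsCompact (r ⁻¹' (V ∩ X) ∩ d ⁻¹' X) := by
  obtain ⟨_, V1, hV1, hK⟩ := hv
  obtain ⟨K, hKn, hKV, hKc⟩ := LocallyCompactSpace.local_compact_nhds v V1 hV1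
  refine ⟨K, hKn, hKc.isClosed, ?_⟩
  have : r ⁻¹' (K ∩ X) ∩ d ⁻¹' X = (r ⁻¹' (V1 ∩ X) ∩ d ⁻¹' X) ∩ r ⁻¹' K := by
    ext e; constructor
    · rintro ⟨⟨h1, h2⟩, h3⟩; exact ⟨⟨⟨hKV h1, h2⟩, h3⟩, h1⟩
    · rintro ⟨⟨⟨_, h2⟩, h3⟩, h4⟩; exact ⟨⟨h4, h2⟩, h3⟩
  rw [this]
  exact hK.inter_right (hKc.isClosed.preimage hr)

private lemma finIn_down {d r : E1 → E0} (hdc : Continuous d) (hr : Continuous r)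
    [T2Space E1] {X X' : Set E0} (hX'c : IsClosed X') (hsub : X' ⊆ X) {v : E0}
    (hvX' : v ∈ X') (hv : v ∈ FinIn d r X) : v ∈ FinIn d r X' := by
  obtain ⟨_, V, hV, hK⟩ := hv
  refine ⟨hvX', V, hV, ?_⟩
  have : r ⁻¹' (V ∩ X') ∩ d ⁻¹' X'
      = (r ⁻¹' (V ∩ X) ∩ d ⁻¹' X) ∩ (r ⁻¹' X' ∩ d ⁻¹' X') := by
    ext e; constructor
    · rintro ⟨⟨h1, h2⟩, h3⟩; exact ⟨⟨⟨h1, hsub h2⟩, hsub h3⟩, h2, h3⟩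
    · rintro ⟨⟨⟨h1, _⟩, _⟩, h2, h3⟩; exact ⟨⟨h1, h2⟩, h3⟩
  rw [this]
  exact hK.inter_right ((hX'c.preimage hr).inter (hX'c.preimage hdc))

private lemma finIn_union_both {d r : E1 → E0} (hdc : Continuous d) (hr : Continuous r)
    [LocallyCompactSpace E0] [T2Space E0] [T2Space E1] {X1 X2 : Set E0}
    (h1c : IsClosed X1) (h2c : IsClosed X2) (p1 : PosInv d r X1) (p2 : PosInv d r X2) {v : E0}
    (hf1 : v ∈ FinIn d r X1) (hf2 : v ∈ FinIn d r X2) : v ∈ FinIn d r (X1 ∪ X2) := by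
  obtain ⟨V1, hV1, hV1c, hK1⟩ := finIn_closed_nhds hr hf1
  obtain ⟨V2, hV2, hV2c, hK2⟩ := finIn_closed_nhds hr hf2
  refine ⟨Or.inl hf1.1, V1 ∩ V2, Filter.inter_mem hV1 hV2, ?_⟩
  refine (hK1.union hK2).of_isClosed_subset
    ((((hV1c.inter hV2c).inter (h1c.union h2c)).preimage hr).inter
      ((h1c.union h2c).preimage hdc)) ?_
  rintro e ⟨⟨⟨hv1, hv2⟩, _⟩, (hd1 | hd2)⟩
  · exact Or.inl ⟨⟨hv1, p1 e hd1⟩, hd1⟩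
  · exact Or.inr ⟨⟨hv2, p2 e hd2⟩, hd2⟩

private lemma finIn_union_one {d r : E1 → E0} (hdc : Continuous d) (hr : Continuous r)
    [LocallyCompactSpace E0] [T2Space E0] [T2Space E1] {X1 X2 : Set E0}
    (h1c : IsClosed X1) (h2c : IsClosed X2) (p1 : PosInv d r X1) (p2 : PosInv d r X2) {v : E0}
    (hf1 : v ∈ FinIn d r X1) (hv2 : v ∉ X2) : v ∈ FinIn d r (X1 ∪ X2) := by
  obtain ⟨V1, hV1, hV1c, hK1⟩ := finIn_closed_nhds hr hf1
  obtain ⟨W, hWn, hWsub, hWc⟩ :=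
    LocallyCompactSpace.local_compact_nhds v X2ᶜ (h2c.isOpen_compl.mem_nhds hv2)
  refine ⟨Or.inl hf1.1, V1 ∩ W, Filter.inter_mem hV1 hWn, ?_⟩
  refine hK1.of_isClosed_subset
    ((((hV1c.inter hWc.isClosed).inter (h1c.union h2c)).preimage hr).inter
      ((h1c.union h2c).preimage hdc)) ?_
  rintro e ⟨⟨⟨hv1, hvW⟩, _⟩, (hd1 | hd2)⟩
  · exact ⟨⟨hv1, p1 e hd1⟩, hd1⟩
  · exact absurd (p2 e hd2) (hWsub hvW)

theorem stmt3 [LocallyCompactSpace E0] [T2Space E0] [LocallyCompactSpace E1] [T2Space E1]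
    (d r : E1 → E0) (hd : IsLocalHomeomorph d) (hr : Continuous r)
    (X1 X2 : Set E0) (h1c : IsClosed X1) (h2c : IsClosed X2)
    (h1 : Invariant d r X1) (h2 : Invariant d r X2) :
    IsClosed (X1 ∪ X2) ∧ Invariant d r (X1 ∪ X2) ∧
    SceIn d r (X1 ∪ X2) ⊆ SceIn d r X1 ∪ SceIn d r X2 ∧
    InfIn d r (X1 ∪ X2) = InfIn d r X1 ∪ InfIn d r X2 := by
  have hdc : Continuous d := hd.continuous
  have hXc : IsClosed (X1 ∪ X2) := h1c.union h2c
  refine ⟨hXc, ⟨?_, ?_⟩, ?_, ?_⟩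
  · rintro e (he | he)
    · exact Or.inl (h1.1 e he)
    · exact Or.inr (h2.1 e he)
  · rintro v ⟨(hv | hv), hrg⟩
    · obtain ⟨e, he, hde⟩ := h1.2 v ⟨hv, hrg⟩
      exact ⟨e, he, Or.inl hde⟩
    · obtain ⟨e, he, hde⟩ := h2.2 v ⟨hv, hrg⟩
      exact ⟨e, he, Or.inr hde⟩
  · rintro v ⟨(hv | hv), hnc⟩
    · exact Or.inl ⟨hv, fun hc => hnc (closure_mono
        (image_mono (preimage_mono subset_union_left)) hc)⟩
    · exact Or.inr ⟨hv, fun hc => hnc (closure_mono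
        (image_mono (preimage_mono subset_union_right)) hc)⟩
  · ext v
    constructor
    · rintro ⟨hvX, hvF⟩
      by_contra hcon
      simp only [InfIn, mem_union, mem_diff, not_or, not_and, not_not] at hcon
      obtain ⟨hc1, hc2⟩ := hcon
      apply hvF
      rcases hvX with hv1 | hv2
      · by_cases hv2 : v ∈ X2
        · exact finIn_union_both hdc hr h1c h2c h1.1 h2.1 (hc1 hv1) (hc2 hv2)
        · exact finIn_union_one hdc hr h1c h2c h1.1 h2.1 (hc1 hv1) hv2
      · by_cases hv1 : v ∈ X1
        · exact finIn_union_both hdc hr h1c h2c h1.1 h2.1 (hc1 hv1) (hc2 hv2)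
        · rw [union_comm]
          exact finIn_union_one hdc hr h2c h1c h2.1 h1.1 (hc2 hv2) hv1
    · rintro (⟨hv, hnf⟩ | ⟨hv, hnf⟩)
      · exact ⟨Or.inl hv, fun hF => hnf (finIn_down hdc hr h1c subset_union_left hv hF)⟩
      · exact ⟨Or.inr hv, fun hF => hnf (finIn_down hdc hr h2c subset_union_right hv hF)⟩
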